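/- arXiv:2007.02649 — 3 statements merged into one kernel-verified Lean document; each statement's English description precedes it below -/
import Mathlib

section
/- Let G be a group with a pseudo-norm ν and let n, d be integers with n − 1 > d ≥ 0. If a cochain c̄ : G^{n−1} → ℝ satisfies |c̄(g_1,…,g_{n−1})| ≤ C·ν_{(n−1,d)}(g_1,…,g_{n−1}) + D for all g_1,…,g_{n−1} ∈ G (for some constants C, D ≥ 0), then its coboundary satisfies |δ̄c̄(g_1,…,g_n)| ≤ (n+1)·(C·ν_{(n,d)}(g_1,…,g_n) + D) for all g_1,…,g_n ∈ G. In particular, the coboundary map δ̄ sends C^{n−1}_{(d)}(G,ν) into C^n_{(d)}(G,ν), so (C^•_{(d)}(G,ν), δ̄) is a subcomplex of the inhomogeneous cochain complex. -/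
/-- `ν` is a pseudo-norm on the group `G`: nonnegative, subadditive,
symmetric under inverses, and vanishing at the identity. -/
def IsPseudoNorm {G : Type*} [Group G] (ν : G → ℝ) : Prop :=
  (∀ g : G, 0 ≤ ν g) ∧ (∀ g h : G, ν (g * h) ≤ ν g + ν h) ∧
    (∀ g : G, ν g⁻¹ = ν g) ∧ ν (1 : G) = 0

/-- `ν_{(n,d)}(g_1,…,g_n)`: the minimum over subsets `I ⊆ {1,…,n}` with
`|I| = n - d` of `∑_{i ∈ I} ν (g i)`. -/
noncomputable def nuNd {G : Type*} (ν : G → ℝ) {n : ℕ} (d : ℕ) (g : Fin n → G) : ℝ :=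
  sInf {x : ℝ | ∃ I : Finset (Fin n), I.card = n - d ∧ x = ∑ i ∈ I, ν (g i)}

/-- A cochain `c : G^n → ℝ` belongs to `C^n_{(d)}(G,ν)` if there are constants
`C, D ≥ 0` with `|c(g_1,…,g_n)| ≤ C·ν_{(n,d)}(g_1,…,g_n) + D` for all tuples. -/
def MemControlled {G : Type*} [Group G] (ν : G → ℝ) {n : ℕ} (d : ℕ)
    (c : (Fin n → G) → ℝ) : Prop :=
  ∃ C D : ℝ, 0 ≤ C ∧ 0 ≤ D ∧ ∀ g : Fin n → G, |c g| ≤ C * nuNd ν d g + D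

/-- The inhomogeneous coboundary of a cochain `c : G^n → ℝ`:
`δ̄c(g_1,…,g_{n+1}) = c(g_2,…,g_{n+1}) + ∑_{i=1}^{n} (−1)^i c(g_1,…,g_i g_{i+1},…,g_{n+1})
  + (−1)^{n+1} c(g_1,…,g_n)`. -/
noncomputable def coboundary {G : Type*} [Group G] {n : ℕ} (c : (Fin n → G) → ℝ)
    (g : Fin (n + 1) → G) : ℝ :=
  c (fun i => g i.succ)
    + ∑ i : Fin n, (-1 : ℝ) ^ ((i : ℕ) + 1) *
        c (fun j => if (j : ℕ) < (i : ℕ) then g j.castSucc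
            else if (j : ℕ) = (i : ℕ) then g j.castSucc * g j.succ
            else g j.succ)
    + (-1 : ℝ) ^ (n + 1) * c (fun i => g i.castSucc)

open Finset

section Aux

variable {G : Type*} [Group G] (ν : G → ℝ)

lemma sum_nu_nonneg (hν0 : ∀ g : G, 0 ≤ ν g) {n : ℕ} (g : Fin n → G) (I : Finset (Fin n)) :
    0 ≤ ∑ i ∈ I, ν (g i) :=
  Finset.sum_nonneg fun i _ => hν0 (g i)

lemma nuNd_nonneg (hν0 : ∀ g : G, 0 ≤ ν g) {n : ℕ} (d : ℕ) (g : Fin n → G) :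
    0 ≤ nuNd ν d g :=
  Real.sInf_nonneg (by rintro x ⟨I, -, rfl⟩; exact sum_nu_nonneg ν hν0 g I)

lemma nuNd_le_sum (hν0 : ∀ g : G, 0 ≤ ν g) {n : ℕ} (d : ℕ) (g : Fin n → G)
    (J : Finset (Fin n)) (hJ : J.card = n - d) :
    nuNd ν d g ≤ ∑ j ∈ J, ν (g j) := by
  apply csInf_le
  · exact ⟨0, by rintro x ⟨I, -, rfl⟩; exact sum_nu_nonneg ν hν0 g I⟩
  · exact ⟨J, hJ, rfl⟩

lemma nuNd_succ_le (hν0 : ∀ g : G, 0 ≤ ν g) {n d : ℕ}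
    (h : Fin n → G) (g : Fin (n + 1) → G)
    (hb : ∀ I : Finset (Fin (n + 1)), I.card = n + 1 - d →
      ∃ J : Finset (Fin n), J.card = n - d ∧ ∑ j ∈ J, ν (h j) ≤ ∑ i ∈ I, ν (g i)) :
    nuNd ν d h ≤ nuNd ν d g := by
  apply le_csInf
  · obtain ⟨I, -, hI⟩ := Finset.exists_subset_card_eq (s := (univ : Finset (Fin (n + 1)))) (n := n + 1 - d)
      (by rw [Finset.card_univ, Fintype.card_fin]; omega)
    exact ⟨_, I, hI, rfl⟩
  · rintro x ⟨I, hI, rfl⟩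
    obtain ⟨J, hJ, hle⟩ := hb I hI
    exact (nuNd_le_sum ν hν0 d h J hJ).trans hle

/-- Generic bound-transfer lemma with one exceptional index. -/
lemma hb_one (hν0 : ∀ g : G, 0 ≤ ν g) {n d : ℕ}
    (h : Fin n → G) (g : Fin (n + 1) → G) (k₀ : Fin (n + 1)) (ψ : Fin (n + 1) → Fin n)
    (hg : ∀ k, k ≠ k₀ → h (ψ k) = g k)
    (hinj : ∀ k₁ k₂, k₁ ≠ k₀ → k₂ ≠ k₀ → ψ k₁ = ψ k₂ → k₁ = k₂) :
    ∀ I : Finset (Fin (n + 1)), I.card = n + 1 - d →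
      ∃ J : Finset (Fin n), J.card = n - d ∧ ∑ j ∈ J, ν (h j) ≤ ∑ i ∈ I, ν (g i) := by
  intro I hI
  set I' := I.erase k₀ with hI'
  have hcard' : n - d ≤ I'.card := by
    have h1 := Finset.pred_card_le_card_erase (s := I) (a := k₀)
    rw [← hI'] at h1
    omega
  have hmem : ∀ k ∈ I', k ≠ k₀ ∧ k ∈ I := fun k hk =>
    ⟨Finset.ne_of_mem_erase hk, Finset.mem_of_mem_erase hk⟩
  have hinj' : ∀ x ∈ I', ∀ y ∈ I', ψ x = ψ y → x = y := fun x hx y hy he =>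
    hinj x y (hmem _ hx).1 (hmem _ hy).1 he
  have hinjOn : Set.InjOn ψ ↑I' := fun x hx y hy he => hinj' x hx y hy he
  have hcardim : (I'.image ψ).card = I'.card := Finset.card_image_of_injOn hinjOn
  obtain ⟨J, hJsub, hJcard⟩ := Finset.exists_subset_card_eq (s := I'.image ψ) (n := n - d) (by omega)
  refine ⟨J, hJcard, ?_⟩
  calc ∑ j ∈ J, ν (h j) ≤ ∑ j ∈ I'.image ψ, ν (h j) :=
        Finset.sum_le_sum_of_subset_of_nonneg hJsub (fun i _ _ => hν0 _)
    _ = ∑ k ∈ I', ν (h (ψ k)) := Finset.sum_image hinj'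
    _ = ∑ k ∈ I', ν (g k) := Finset.sum_congr rfl fun k hk => by rw [hg k (hmem _ hk).1]
    _ ≤ ∑ k ∈ I, ν (g k) :=
        Finset.sum_le_sum_of_subset_of_nonneg (Finset.erase_subset _ _) (fun i _ _ => hν0 _)

/-- Bound-transfer lemma for the middle faces. -/
lemma hb_middle (hν0 : ∀ g : G, 0 ≤ ν g) (hνadd : ∀ g h : G, ν (g * h) ≤ ν g + ν h)
    {n d : ℕ} (hd : d < n)
    (h : Fin n → G) (g : Fin (n + 1) → G) (i : Fin n)
    (hsmall : ∀ j : Fin n, (j : ℕ) < (i : ℕ) → h j = g j.castSucc)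
    (hbig : ∀ j : Fin n, (i : ℕ) < (j : ℕ) → h j = g j.succ)
    (hmid : h i = g i.castSucc * g i.succ) :
    ∀ I : Finset (Fin (n + 1)), I.card = n + 1 - d →
      ∃ J : Finset (Fin n), J.card = n - d ∧ ∑ j ∈ J, ν (h j) ≤ ∑ k ∈ I, ν (g k) := by
  set a := i.castSucc with ha_def
  set b := i.succ with hb_def
  have hav : (a : ℕ) = (i : ℕ) := rfl
  have hbv : (b : ℕ) = (i : ℕ) + 1 := rfl
  have hab : a ≠ b := by
    intro hcon
    have := congrArg Fin.val hcon
    omega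
  set ψ : Fin (n + 1) → Fin n := fun k =>
    if hk : (k : ℕ) ≤ (i : ℕ) then ⟨k, lt_of_le_of_lt hk i.isLt⟩
    else ⟨(k : ℕ) - 1, by have h1 := k.isLt; have h2 := i.isLt; omega⟩ with hψ_def
  have hψle : ∀ k : Fin (n + 1), (k : ℕ) ≤ (i : ℕ) → (ψ k : ℕ) = (k : ℕ) := by
    intro k hk; simp [hψ_def, hk]
  have hψgt : ∀ k : Fin (n + 1), (i : ℕ) < (k : ℕ) → (ψ k : ℕ) = (k : ℕ) - 1 := by
    intro k hk; simp [hψ_def, Nat.not_le.mpr hk]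
  have heq : ∀ k : Fin (n + 1), (k : ℕ) ≠ (i : ℕ) → (k : ℕ) ≠ (i : ℕ) + 1 → h (ψ k) = g k := by
    intro k h1 h2
    by_cases hk : (k : ℕ) ≤ (i : ℕ)
    · have hv := hψle k hk
      rw [hsmall (ψ k) (by omega)]
      congr 1
      apply Fin.ext
      simpa using hv
    · push_neg at hk
      have hv := hψgt k hk
      rw [hbig (ψ k) (by omega)]
      congr 1
      apply Fin.ext
      simp only [Fin.val_succ, hv]
      omega
  have hinj : ∀ k₁ k₂ : Fin (n + 1), (k₁ : ℕ) ≠ (i : ℕ) → (k₁ : ℕ) ≠ (i : ℕ) + 1 →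
      (k₂ : ℕ) ≠ (i : ℕ) → (k₂ : ℕ) ≠ (i : ℕ) + 1 → ψ k₁ = ψ k₂ → k₁ = k₂ := by
    intro k₁ k₂ h11 h12 h21 h22 he
    have hev : (ψ k₁ : ℕ) = (ψ k₂ : ℕ) := congrArg Fin.val he
    apply Fin.ext
    by_cases hk1 : (k₁ : ℕ) ≤ (i : ℕ) <;> by_cases hk2 : (k₂ : ℕ) ≤ (i : ℕ)
    · rw [hψle k₁ hk1, hψle k₂ hk2] at hev; exact hev
    · push_neg at hk2; rw [hψle k₁ hk1, hψgt k₂ hk2] at hev; omega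
    · push_neg at hk1; rw [hψgt k₁ hk1, hψle k₂ hk2] at hev; omega
    · push_neg at hk1 hk2; rw [hψgt k₁ hk1, hψgt k₂ hk2] at hev; omega
  have hψne : ∀ k : Fin (n + 1), (k : ℕ) ≠ (i : ℕ) → (k : ℕ) ≠ (i : ℕ) + 1 →
      (ψ k : ℕ) ≠ (i : ℕ) := by
    intro k h1 h2
    by_cases hk : (k : ℕ) ≤ (i : ℕ)
    · rw [hψle k hk]; omega
    · push_neg at hk; rw [hψgt k hk]; omega
  intro I hI
  set I'' := (I.erase a).erase b with hI''_def
  have hmem'' : ∀ k ∈ I'', ((k : ℕ) ≠ (i : ℕ) ∧ (k : ℕ) ≠ (i : ℕ) + 1) ∧ k ∈ I := by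
    intro k hk
    have h1 := Finset.ne_of_mem_erase hk
    have h2 := Finset.mem_of_mem_erase hk
    have h3 := Finset.ne_of_mem_erase h2
    have h4 := Finset.mem_of_mem_erase h2
    refine ⟨⟨?_, ?_⟩, h4⟩
    · intro hcon; exact h3 (Fin.ext (by omega))
    · intro hcon; exact h1 (Fin.ext (by omega))
  have hinj'' : ∀ x ∈ I'', ∀ y ∈ I'', ψ x = ψ y → x = y := by
    intro x hx y hy he
    exact hinj x y (hmem'' x hx).1.1 (hmem'' x hx).1.2 (hmem'' y hy).1.1 (hmem'' y hy).1.2 he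
  have hinjOn : Set.InjOn ψ ↑I'' := fun x hx y hy he => hinj'' x hx y hy he
  have hcardim : (I''.image ψ).card = I''.card := Finset.card_image_of_injOn hinjOn
  have hsum_img : ∑ j ∈ I''.image ψ, ν (h j) = ∑ k ∈ I'', ν (g k) := by
    rw [Finset.sum_image hinj'']
    exact Finset.sum_congr rfl fun k hk => by
      rw [heq k (hmem'' k hk).1.1 (hmem'' k hk).1.2]
  by_cases hcase : a ∈ I ∧ b ∈ I
  · obtain ⟨haI, hbI⟩ := hcase
    have hbI' : b ∈ I.erase a := Finset.mem_erase.mpr ⟨fun hcon => hab hcon.symm, hbI⟩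
    have hc1 : (I.erase a).card = I.card - 1 := Finset.card_erase_of_mem haI
    have hc2 : I''.card = I.card - 2 := by
      rw [hI''_def, Finset.card_erase_of_mem hbI', hc1]
      omega
    have himg : i ∉ I''.image ψ := by
      intro hcon
      obtain ⟨k, hk, hke⟩ := Finset.mem_image.mp hcon
      exact hψne k (hmem'' k hk).1.1 (hmem'' k hk).1.2 (congrArg Fin.val hke)
    refine ⟨insert i (I''.image ψ), ?_, ?_⟩
    · rw [Finset.card_insert_of_notMem himg, hcardim, hc2, hI]; omega
    · rw [Finset.sum_insert himg, hsum_img, hmid]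
      have e2 : ν (g a) + (ν (g b) + ∑ k ∈ I'', ν (g k)) = ∑ k ∈ I, ν (g k) := by
        rw [hI''_def, Finset.add_sum_erase _ (fun k => ν (g k)) hbI', Finset.add_sum_erase _ (fun k => ν (g k)) haI]
      have := hνadd (g a) (g b)
      linarith
  · have hcard'' : n - d ≤ I''.card := by
      rcases not_and_or.mp hcase with haI | hbI
      · rw [hI''_def, Finset.erase_eq_of_notMem haI]
        have := Finset.pred_card_le_card_erase (s := I) (a := b)
        omega
      · have hbI' : b ∉ I.erase a := fun hcon => hbI (Finset.mem_of_mem_erase hcon)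
        rw [hI''_def, Finset.erase_eq_of_notMem hbI']
        have := Finset.pred_card_le_card_erase (s := I) (a := a)
        omega
    obtain ⟨J, hJsub, hJcard⟩ := Finset.exists_subset_card_eq (s := I''.image ψ) (n := n - d) (by omega)
    refine ⟨J, hJcard, ?_⟩
    calc ∑ j ∈ J, ν (h j) ≤ ∑ j ∈ I''.image ψ, ν (h j) :=
          Finset.sum_le_sum_of_subset_of_nonneg hJsub (fun x _ _ => hν0 _)
      _ = ∑ k ∈ I'', ν (g k) := hsum_img
      _ ≤ ∑ k ∈ I, ν (g k) := Finset.sum_le_sum_of_subset_of_nonneg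
            (fun x hx => (hmem'' x hx).2) (fun x _ _ => hν0 _)

end Aux

/-- If `c̄ ∈ C^{n}_{(d)}(G,ν)` (with bound `C·ν_{(n,d)} + D`), then its coboundary
satisfies `|δ̄c̄(g_1,…,g_{n+1})| ≤ (n+2)·(C·ν_{(n+1,d)}(g_1,…,g_{n+1}) + D)`.
In particular `δ̄` maps `C^{n}_{(d)}(G,ν)` into `C^{n+1}_{(d)}(G,ν)`, so the
norm controlled cochains form a subcomplex of the inhomogeneous complex.
(Here the paper's degrees `n-1 > d ≥ 0` correspond to `d < n` below.) -/
theorem coboundary_mem_controlled {G : Type*} [Group G] (ν : G → ℝ)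
    (hν : IsPseudoNorm ν) (n d : ℕ) (hd : d < n)
    (C D : ℝ) (hC : 0 ≤ C) (hD : 0 ≤ D) (c : (Fin n → G) → ℝ)
    (hc : ∀ g : Fin n → G, |c g| ≤ C * nuNd ν d g + D) :
    (∀ g : Fin (n + 1) → G,
      |coboundary c g| ≤ ((n : ℝ) + 2) * (C * nuNd ν d g + D)) ∧
    MemControlled ν d (coboundary c) := by
  obtain ⟨hν0, hνadd, -, -⟩ := hν
  have key : ∀ g : Fin (n + 1) → G,
      |coboundary c g| ≤ ((n : ℝ) + 2) * (C * nuNd ν d g + D) := by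
    intro g
    set K := C * nuNd ν d g + D with hK
    have hbound : ∀ h : Fin n → G, nuNd ν d h ≤ nuNd ν d g → |c h| ≤ K := by
      intro h hle
      calc |c h| ≤ C * nuNd ν d h + D := hc h
        _ ≤ K := by
            have := mul_le_mul_of_nonneg_left hle hC
            rw [hK]; linarith
    -- first face
    have h0 : |c (fun i : Fin n => g i.succ)| ≤ K := by
      apply hbound
      apply nuNd_succ_le ν hν0
      apply hb_one ν hν0 _ g (0 : Fin (n + 1))
        (fun k => ⟨(k : ℕ) - 1, by have h1 := k.isLt; have h2 := hd; omega⟩)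
      · intro k hk
        have hk0 : (k : ℕ) ≠ 0 := fun hcon => hk (Fin.ext hcon)
        congr 1
        apply Fin.ext
        simp only [Fin.val_succ]
        omega
      · intro k₁ k₂ h1 h2 he
        have h1' : (k₁ : ℕ) ≠ 0 := fun hcon => h1 (Fin.ext hcon)
        have h2' : (k₂ : ℕ) ≠ 0 := fun hcon => h2 (Fin.ext hcon)
        have := congrArg Fin.val he
        simp only at this
        exact Fin.ext (by omega)
    -- last face
    have hlast : |c (fun i : Fin n => g i.castSucc)| ≤ K := by
      apply hbound
      apply nuNd_succ_le ν hν0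
      apply hb_one ν hν0 _ g (Fin.last n)
        (fun k => if hk : (k : ℕ) < n then ⟨k, hk⟩ else ⟨0, by omega⟩)
      · intro k hk
        have hk' : (k : ℕ) < n := by
          have h1 := k.isLt
          have : (k : ℕ) ≠ n := fun hcon => hk (Fin.ext (by simp [Fin.val_last, hcon]))
          omega
        simp only [dif_pos hk']
        have hcs : ((⟨(k : ℕ), hk'⟩ : Fin n)).castSucc = k := Fin.ext (by simp)
        rw [hcs]
      · intro k₁ k₂ h1 h2 he
        have h1' : (k₁ : ℕ) < n := by
          have := k₁.isLt
          have : (k₁ : ℕ) ≠ n := fun hcon => h1 (Fin.ext (by simp [Fin.val_last, hcon]))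
          omega
        have h2' : (k₂ : ℕ) < n := by
          have := k₂.isLt
          have : (k₂ : ℕ) ≠ n := fun hcon => h2 (Fin.ext (by simp [Fin.val_last, hcon]))
          omega
        rw [dif_pos h1', dif_pos h2'] at he
        have := congrArg Fin.val he
        simp only at this
        exact Fin.ext this
    -- middle faces
    have hmidb : ∀ i : Fin n,
        |c (fun j : Fin n => if (j : ℕ) < (i : ℕ) then g j.castSucc
            else if (j : ℕ) = (i : ℕ) then g j.castSucc * g j.succ
            else g j.succ)| ≤ K := by
      intro i
      apply hbound
      apply nuNd_succ_le ν hν0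
      apply hb_middle ν hν0 hνadd hd _ g i
      · intro j hj
        simp only [if_pos hj]
      · intro j hj
        rw [if_neg (by omega), if_neg (by omega)]
      · rw [if_neg (by omega), if_pos rfl]
    have hsumK : |∑ i : Fin n, (-1 : ℝ) ^ ((i : ℕ) + 1) *
        c (fun j : Fin n => if (j : ℕ) < (i : ℕ) then g j.castSucc
            else if (j : ℕ) = (i : ℕ) then g j.castSucc * g j.succ
            else g j.succ)| ≤ (n : ℝ) * K := by
      calc |∑ i : Fin n, _| ≤ ∑ i : Fin n, |(-1 : ℝ) ^ ((i : ℕ) + 1) *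
            c (fun j : Fin n => if (j : ℕ) < (i : ℕ) then g j.castSucc
              else if (j : ℕ) = (i : ℕ) then g j.castSucc * g j.succ
              else g j.succ)| := Finset.abs_sum_le_sum_abs _ _
        _ ≤ ∑ _i : Fin n, K := by
            apply Finset.sum_le_sum
            intro i _
            rw [abs_mul, abs_pow, abs_neg, abs_one, one_pow, one_mul]
            exact hmidb i
        _ = (n : ℝ) * K := by
            rw [Finset.sum_const, Finset.card_univ, Fintype.card_fin, nsmul_eq_mul]
    have hlast' : |(-1 : ℝ) ^ (n + 1) * c (fun i : Fin n => g i.castSucc)| ≤ K := by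
      rw [abs_mul, abs_pow, abs_neg, abs_one, one_pow, one_mul]
      exact hlast
    have habs : |coboundary c g| ≤ K + ((n : ℝ) * K + K) := by
      unfold coboundary
      calc |_| ≤ |c (fun i : Fin n => g i.succ)| + |∑ i : Fin n, (-1 : ℝ) ^ ((i : ℕ) + 1) *
            c (fun j : Fin n => if (j : ℕ) < (i : ℕ) then g j.castSucc
              else if (j : ℕ) = (i : ℕ) then g j.castSucc * g j.succ
              else g j.succ) + (-1 : ℝ) ^ (n + 1) * c (fun i : Fin n => g i.castSucc)| := by
              rw [add_assoc]; exact abs_add_le _ _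
        _ ≤ K + ((n : ℝ) * K + K) := by
            apply add_le_add h0
            exact (abs_add_le _ _).trans (add_le_add hsumK hlast')
    calc |coboundary c g| ≤ K + ((n : ℝ) * K + K) := habs
      _ = ((n : ℝ) + 2) * K := by ring
  refine ⟨key, ((n : ℝ) + 2) * C, ((n : ℝ) + 2) * D, ?_, ?_, ?_⟩
  · positivity
  · positivity
  · intro g
    calc |coboundary c g| ≤ ((n : ℝ) + 2) * (C * nuNd ν d g + D) := key g
      _ = ((n : ℝ) + 2) * C * nuNd ν d g + ((n : ℝ) + 2) * D := by ring
end

section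
/- Let G be a group with a pseudo-norm ν, let n, d be integers with n − 1 > d ≥ 0, and let 1 ≤ i ≤ n − 1. Then for all g_1, …, g_n ∈ G one has ν_{(n−1,d)}(g_1,…,g_{i−1}, g_i g_{i+1}, g_{i+2},…,g_n) ≤ ν_{(n,d)}(g_1,…,g_n), i.e., merging two adjacent entries of the tuple by multiplication does not increase ν_{(·,d)}. -/
/-- Merging two adjacent entries of a tuple by multiplication does not increase
`ν_{(·,d)}`: for `1 ≤ i ≤ n-1` (here `i : Fin n`, 0-based),
`ν_{(n-1,d)}(g_1,…,g_{i-1}, g_i g_{i+1}, g_{i+2},…,g_n) ≤ ν_{(n,d)}(g_1,…,g_n)`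
whenever `n - 1 > d ≥ 0`. -/
theorem nuNd_contract_le {G : Type*} [Group G] (ν : G → ℝ) (hν : IsPseudoNorm ν)
    (n d : ℕ) (hd : d < n) (i : Fin n) (g : Fin (n + 1) → G) :
    nuNd ν d (fun j : Fin n =>
        if (j : ℕ) < (i : ℕ) then g j.castSucc
        else if (j : ℕ) = (i : ℕ) then g j.castSucc * g j.succ
        else g j.succ)
      ≤ nuNd ν d g := by
  classical
  obtain ⟨hnn, hsub, hinv, hone⟩ := hν
  set f : Fin n → G := fun j : Fin n =>
        if (j : ℕ) < (i : ℕ) then g j.castSucc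
        else if (j : ℕ) = (i : ℕ) then g j.castSucc * g j.succ
        else g j.succ with hf
  -- the projection merging indices i and i+1
  set π : Fin (n + 1) → Fin n := fun k =>
    if h : (k : ℕ) ≤ (i : ℕ) then ⟨(k : ℕ), lt_of_le_of_lt h i.isLt⟩
    else ⟨(k : ℕ) - 1, by omega⟩ with hπ
  have key : ∀ I : Finset (Fin (n + 1)), I.card = (n + 1) - d →
      ∃ J : Finset (Fin n), J.card = n - d ∧ ∑ j ∈ J, ν (f j) ≤ ∑ k ∈ I, ν (g k) := by
    intro I hI
    set T : Finset (Fin (n + 1)) := I \ {i.castSucc, i.succ} with hT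
    have hTsub : T ⊆ I := Finset.sdiff_subset
    have hT_not : ∀ k ∈ T, (k : ℕ) ≠ (i : ℕ) ∧ (k : ℕ) ≠ (i : ℕ) + 1 := by
      intro k hk
      simp only [hT, Finset.mem_sdiff, Finset.mem_insert, Finset.mem_singleton] at hk
      push_neg at hk
      refine ⟨fun h => hk.2.1 (Fin.ext (by simpa using h)),
        fun h => hk.2.2 (Fin.ext (by simpa using h))⟩
    have hπ_injT : ∀ a ∈ T, ∀ b ∈ T, π a = π b → a = b := by
      intro a ha b hb hab
      obtain ⟨ha1, ha2⟩ := hT_not a ha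
      obtain ⟨hb1, hb2⟩ := hT_not b hb
      simp only [hπ] at hab
      apply Fin.ext
      split_ifs at hab with h1 h2 h2 <;> simp only [Fin.mk.injEq] at hab <;> omega
    have hfπ : ∀ k ∈ T, ν (f (π k)) = ν (g k) := by
      intro k hk
      obtain ⟨h1, h2⟩ := hT_not k hk
      simp only [hπ, hf]
      by_cases hki : (k : ℕ) ≤ (i : ℕ)
      · have hlt : (k : ℕ) < (i : ℕ) := lt_of_le_of_ne hki h1
        rw [dif_pos hki]
        dsimp only
        rw [if_pos hlt]
        exact congrArg ν (congrArg g (Fin.ext (by simp)))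
      · rw [dif_neg hki]
        dsimp only
        rw [if_neg (by omega), if_neg (by omega)]
        refine congrArg ν (congrArg g (Fin.ext ?_))
        simp only [Fin.val_succ]
        show (k : ℕ) - 1 + 1 = (k : ℕ)
        omega
    have hπT_ne_i : ∀ j ∈ T.image π, j ≠ i := by
      intro j hj
      simp only [Finset.mem_image] at hj
      obtain ⟨k, hk, hπk⟩ := hj
      obtain ⟨h1, h2⟩ := hT_not k hk
      intro hji
      have := congrArg Fin.val (hπk.trans hji)
      simp only [hπ] at this
      split_ifs at this <;> simp at this <;> omega
    have hsum_img : ∑ j ∈ T.image π, ν (f j) = ∑ k ∈ T, ν (g k) := by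
      rw [Finset.sum_image hπ_injT]
      exact Finset.sum_congr rfl hfπ
    have hcard_img : (T.image π).card = T.card := Finset.card_image_of_injOn hπ_injT
    by_cases hboth : i.castSucc ∈ I ∧ i.succ ∈ I
    · -- both endpoints in I: insert the merged index
      have hpairsub : ({i.castSucc, i.succ} : Finset (Fin (n + 1))) ⊆ I := by
        intro x hx
        simp only [Finset.mem_insert, Finset.mem_singleton] at hx
        rcases hx with h | h <;> subst h
        · exact hboth.1
        · exact hboth.2
      have hne : i.castSucc ≠ i.succ := by
        intro h
        have := congrArg Fin.val h
        simp at this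
      have hcardT : T.card = I.card - 2 := by
        rw [hT, Finset.card_sdiff_of_subset hpairsub]
        congr 1
        rw [Finset.card_insert_of_notMem (by simpa using hne), Finset.card_singleton]
      have hi_not : i ∉ T.image π := fun h => hπT_ne_i i h rfl
      refine ⟨insert i (T.image π), ?_, ?_⟩
      · rw [Finset.card_insert_of_notMem hi_not, hcard_img, hcardT, hI]
        omega
      · rw [Finset.sum_insert hi_not, hsum_img]
        have hfi : ν (f i) ≤ ν (g i.castSucc) + ν (g i.succ) := by
          simp only [hf, lt_irrefl, if_false, if_neg (lt_irrefl (i : ℕ)), if_pos rfl]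
          exact hsub _ _
        have hsplit : ∑ k ∈ T, ν (g k) + ∑ k ∈ {i.castSucc, i.succ}, ν (g k)
            = ∑ k ∈ I, ν (g k) := Finset.sum_sdiff hpairsub
        rw [Finset.sum_pair hne] at hsplit
        linarith
    · -- at most one endpoint in I
      have hcardT : n - d ≤ T.card := by
        rcases not_and_or.mp hboth with h | h
        · have : T = I \ {i.succ} := by
            rw [hT]
            ext x
            simp only [Finset.mem_sdiff, Finset.mem_insert, Finset.mem_singleton]
            constructor
            · rintro ⟨hx, hx2⟩; exact ⟨hx, fun he => hx2 (Or.inr he)⟩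
            · rintro ⟨hx, hx2⟩
              refine ⟨hx, ?_⟩
              rintro (he | he)
              · exact h (he ▸ hx)
              · exact hx2 he
          rw [this]
          have := Finset.le_card_sdiff ({i.succ} : Finset (Fin (n + 1))) I
          simp only [Finset.card_singleton] at this
          omega
        · have : T = I \ {i.castSucc} := by
            rw [hT]
            ext x
            simp only [Finset.mem_sdiff, Finset.mem_insert, Finset.mem_singleton]
            constructor
            · rintro ⟨hx, hx2⟩; exact ⟨hx, fun he => hx2 (Or.inl he)⟩
            · rintro ⟨hx, hx2⟩
              refine ⟨hx, ?_⟩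
              rintro (he | he)
              · exact hx2 he
              · exact h (he ▸ hx)
          rw [this]
          have := Finset.le_card_sdiff ({i.castSucc} : Finset (Fin (n + 1))) I
          simp only [Finset.card_singleton] at this
          omega
      obtain ⟨J, hJsub, hJcard⟩ :=
        Finset.exists_subset_card_eq (s := T.image π) (n := n - d) (by rw [hcard_img]; exact hcardT)
      refine ⟨J, hJcard, ?_⟩
      calc ∑ j ∈ J, ν (f j) ≤ ∑ j ∈ T.image π, ν (f j) :=
            Finset.sum_le_sum_of_subset_of_nonneg hJsub (fun j _ _ => hnn _)
        _ = ∑ k ∈ T, ν (g k) := hsum_img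
        _ ≤ ∑ k ∈ I, ν (g k) :=
            Finset.sum_le_sum_of_subset_of_nonneg hTsub (fun k _ _ => hnn _)
  -- now compare the infima
  have hbdd : BddBelow {x : ℝ | ∃ J : Finset (Fin n), J.card = n - d ∧
      x = ∑ j ∈ J, ν (f j)} := by
    refine ⟨0, fun x hx => ?_⟩
    obtain ⟨J, _, rfl⟩ := hx
    exact Finset.sum_nonneg fun j _ => hnn _
  have hSne : {x : ℝ | ∃ I : Finset (Fin (n + 1)), I.card = (n + 1) - d ∧
      x = ∑ k ∈ I, ν (g k)}.Nonempty := by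
    obtain ⟨I, _, hIcard⟩ := Finset.exists_subset_card_eq (s := (Finset.univ : Finset (Fin (n + 1))))
      (n := (n + 1) - d) (by simp)
    exact ⟨∑ k ∈ I, ν (g k), I, hIcard, rfl⟩
  unfold nuNd
  refine le_csInf hSne ?_
  rintro x ⟨I, hIcard, rfl⟩
  obtain ⟨J, hJcard, hle⟩ := key I hIcard
  exact le_trans (csInf_le hbdd ⟨J, hJcard, rfl⟩) hle
end

section
/- Let n ≥ 1 and 1 ≤ l ≤ n be integers, and let ν_l be the pseudo-norm on ℤ^n defined by ν_l(m_1,…,m_n) = |m_1| + ⋯ + |m_l|. The set of group homomorphisms φ : ℤ^n → ℝ that are Lipschitz with respect to ν_l is a real vector space of dimension l, spanned by the coordinate projections φ_i(m_1,…,m_n) = m_i for 1 ≤ i ≤ l. Equivalently, H^1_{ν_l}(ℤ^n) ≅ ℝ^l. -/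
/-- The pseudo-norm `ν_l` on `ℤ^n`: `ν_l(m_1,…,m_n) = |m_1| + ⋯ + |m_l|`
(here coordinates are indexed by `i : Fin n`, with `i` among the first `l`
coordinates iff `(i : ℕ) < l`). -/
noncomputable def nuL (n l : ℕ) (m : Fin n → ℤ) : ℝ :=
  ∑ i ∈ Finset.univ.filter (fun i : Fin n => (i : ℕ) < l), (|m i| : ℝ)

lemma phi_expand (n : ℕ) (φ : (Fin n → ℤ) →+ ℝ) (m : Fin n → ℤ) :
    φ m = ∑ j : Fin n, (m j : ℝ) * φ (Pi.single j 1) := by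
  conv_lhs => rw [← Finset.univ_sum_single m, map_sum]
  refine Finset.sum_congr rfl fun j _ => ?_
  have : Pi.single j (m j) = m j • (Pi.single j 1 : Fin n → ℤ) := by
    rw [← Pi.single_smul, smul_eq_mul, mul_one]
  rw [this, map_zsmul, zsmul_eq_mul]

lemma reindex_filter (n l : ℕ) (hln : l ≤ n) (f : Fin n → ℝ) :
    ∑ j ∈ Finset.univ.filter (fun j : Fin n => (j : ℕ) < l), f j
      = ∑ i : Fin l, f (Fin.castLE hln i) := by
  refine Finset.sum_bij' (fun j hj => (⟨(j : ℕ), (Finset.mem_filter.mp hj).2⟩ : Fin l))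
    (fun i _ => Fin.castLE hln i) ?_ ?_ ?_ ?_ ?_
  · intro a ha; exact Finset.mem_univ _
  · intro a ha
    simp [Finset.mem_filter, Fin.castLE, a.isLt]
  · intro a ha; ext; rfl
  · intro a ha; ext; rfl
  · intro a ha; rfl

/-- The space of homomorphisms `ℤ^n → ℝ` that are Lipschitz with respect to
`ν_l` is an `l`-dimensional real vector space spanned by the first `l`
coordinate projections: a homomorphism `φ` is Lipschitz with respect to `ν_l`
iff it is a linear combination `φ = ∑_{i ≤ l} a_i·φ_i` of the coordinate
projections `φ_i(m) = m_i` (`1 ≤ i ≤ l`) with uniquely determined coefficients.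
Equivalently, `H^1_{ν_l}(ℤ^n) ≅ ℝ^l`. -/
theorem lipschitz_homs_zn_eq_span_projections (n l : ℕ) (hn : 1 ≤ n)
    (hl : 1 ≤ l) (hln : l ≤ n) (φ : (Fin n → ℤ) →+ ℝ) :
    (∃ C D : ℝ, 0 ≤ C ∧ 0 ≤ D ∧ ∀ m : Fin n → ℤ, |φ m| ≤ C * nuL n l m + D)
      ↔ ∃! a : Fin l → ℝ, ∀ m : Fin n → ℤ,
          φ m = ∑ i : Fin l, a i * (m (Fin.castLE hln i) : ℝ) := by
  constructor
  · rintro ⟨C, D, hC, hD, hlip⟩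
    have hvan : ∀ j : Fin n, ¬ ((j : ℕ) < l) → φ (Pi.single j 1) = 0 := by
      intro j hj
      by_contra hc
      have hcpos : 0 < |φ (Pi.single j 1)| := abs_pos.mpr hc
      obtain ⟨k, hk⟩ := exists_nat_gt (D / |φ (Pi.single j 1)|)
      have hnu : nuL n l (Pi.single j (k : ℤ)) = 0 := by
        apply Finset.sum_eq_zero
        intro i hi
        simp only [Finset.mem_filter] at hi
        have : i ≠ j := fun h => hj (h ▸ hi.2)
        rw [Pi.single_eq_of_ne this]
        simp
      have hle := hlip (Pi.single j (k : ℤ))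
      rw [hnu, mul_zero, zero_add] at hle
      have hsingle : Pi.single j (k : ℤ) = (k : ℤ) • (Pi.single j 1 : Fin n → ℤ) := by
        rw [← Pi.single_smul, smul_eq_mul, mul_one]
      rw [hsingle, map_zsmul, zsmul_eq_mul, abs_mul] at hle
      have hDk : D < (k : ℝ) * |φ (Pi.single j 1)| := by
        rw [div_lt_iff₀ hcpos] at hk
        exact hk
      have habs : |((k : ℤ) : ℝ)| = (k : ℝ) := by
        push_cast; exact abs_of_nonneg (by positivity)
      rw [habs] at hle
      linarith
    have key : ∀ m : Fin n → ℤ,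
        φ m = ∑ i : Fin l, φ (Pi.single (Fin.castLE hln i) 1) * (m (Fin.castLE hln i) : ℝ) := by
      intro m
      rw [phi_expand n φ m,
        ← Finset.sum_filter_of_ne (p := fun j : Fin n => (j : ℕ) < l)
          (f := fun j => (m j : ℝ) * φ (Pi.single j 1))
          (fun j _ h => by by_contra hj; exact h (show ((m j : ℝ)) * φ (Pi.single j 1) = 0 by rw [hvan j hj, mul_zero])),
        reindex_filter n l hln]
      exact Finset.sum_congr rfl fun i _ => mul_comm _ _
    refine ⟨fun i => φ (Pi.single (Fin.castLE hln i) 1), fun m => key m, ?_⟩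
    intro b hb
    funext i
    have h1 := hb (Pi.single (Fin.castLE hln i) 1)
    have h2 := key (Pi.single (Fin.castLE hln i) 1)
    rw [h2] at h1
    have heval : ∀ c : Fin l → ℝ,
        ∑ i' : Fin l, c i' * ((Pi.single (Fin.castLE hln i) 1 : Fin n → ℤ) (Fin.castLE hln i') : ℝ)
          = c i := by
      intro c
      rw [Finset.sum_eq_single i]
      · simp
      · intro i' _ hne
        have : Fin.castLE hln i ≠ Fin.castLE hln i' := by
          intro h; exact hne (Fin.castLE_injective hln h).symm
        rw [Pi.single_eq_of_ne (Ne.symm this)]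
        simp
      · simp
    rw [heval, heval] at h1
    exact h1.symm
  · rintro ⟨a, ha, -⟩
    refine ⟨∑ i : Fin l, |a i|, 0, Finset.sum_nonneg fun i _ => abs_nonneg _, le_refl 0,
      fun m => ?_⟩
    rw [add_zero, ha m]
    calc |∑ i : Fin l, a i * (m (Fin.castLE hln i) : ℝ)|
        ≤ ∑ i : Fin l, |a i * (m (Fin.castLE hln i) : ℝ)| := Finset.abs_sum_le_sum_abs _ _
      _ ≤ ∑ i : Fin l, |a i| * nuL n l m := by
          refine Finset.sum_le_sum fun i _ => ?_
          rw [abs_mul]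
          refine mul_le_mul_of_nonneg_left ?_ (abs_nonneg _)
          have hmem : Fin.castLE hln i ∈ Finset.univ.filter (fun j : Fin n => (j : ℕ) < l) := by
            simp [Fin.castLE, i.isLt]
          have := Finset.single_le_sum
            (f := fun j : Fin n => (|m j| : ℝ)) (fun j _ => by positivity) hmem
          simpa [Int.cast_abs, nuL] using this
      _ = (∑ i : Fin l, |a i|) * nuL n l m := by rw [Finset.sum_mul]
end
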